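/- For every partition λ and positive integer k, there is a bijection between BSSYT(λ,k) and the set of triples (P, i, C) where P ∈ RPP(λ,k), 1 ≤ i ≤ k, and C is a corner of the induced subshape α(P,i). In particular, |BSSYT(λ,k)| = Σ_{P ∈ RPP(λ,k)} Σ_{i=1}^{k} (number of corners of α(P,i)). -/

import Mathlib

open Polynomial

/-- The set of cells of the Young diagram of the partition with parts
`lam 1 ≥ lam 2 ≥ … ≥ lam r`, i.e. pairs `(i,j)` with `1 ≤ i ≤ r` and `1 ≤ j ≤ lam i`. -/
def cells (lam : ℕ → ℕ) (r : ℕ) : Set (ℕ × ℕ) :=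
  {p | 1 ≤ p.1 ∧ p.1 ≤ r ∧ 1 ≤ p.2 ∧ p.2 ≤ lam p.1}

/-- `lam` restricted to indices `1,…,r` is a partition with `r` (positive) parts. -/
def IsPartition (lam : ℕ → ℕ) (r : ℕ) : Prop :=
  (∀ i, 1 ≤ i → i + 1 ≤ r → lam (i + 1) ≤ lam i) ∧ (∀ i, 1 ≤ i → i ≤ r → 1 ≤ lam i)

/-- A partition with `r` rows and `c = lam 1` columns is balanced if every outward corner
of its southeast boundary lies on the main anti-diagonal:
whenever `1 ≤ i < r` and `lam (i+1) < lam i`, one has `lam 1 * (r - i) = r * lam (i+1)`. -/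
def IsBalanced (lam : ℕ → ℕ) (r : ℕ) : Prop :=
  ∀ i, 1 ≤ i → i < r → lam (i + 1) < lam i → lam 1 * (r - i) = r * lam (i + 1)

/-- Flagged semistandard Young tableaux of shape `lam` (with `r` rows):
positive entries, weakly increasing along rows, strictly increasing down columns,
entries in row `i` at most `k + i`; entries outside the diagram are normalized to `0`. -/
def SYT (lam : ℕ → ℕ) (r k : ℕ) : Set ((ℕ × ℕ) → ℕ) :=
  {T | (∀ p, p ∉ cells lam r → T p = 0) ∧
       (∀ p ∈ cells lam r, 1 ≤ T p ∧ T p ≤ k + p.1) ∧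
       (∀ i j, (i, j) ∈ cells lam r → (i, j + 1) ∈ cells lam r → T (i, j) ≤ T (i, j + 1)) ∧
       (∀ i j, (i, j) ∈ cells lam r → (i + 1, j) ∈ cells lam r → T (i, j) < T (i + 1, j))}

/-- Flagged barely set-valued semistandard Young tableaux of shape `lam` (with `r` rows):
finite nonempty sets of positive integers in each cell, exactly one cell receiving a
two-element set and all other cells singletons, weakly increasing along rows
(`A ≤ B` iff every element of `A` is at most every element of `B`) and strictly
increasing down columns, every entry in row `i` at most `k + i`;
cells outside the diagram are normalized to `∅`. -/
def BSSYT (lam : ℕ → ℕ) (r k : ℕ) : Set ((ℕ × ℕ) → Finset ℕ) :=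
  {T | (∀ p, p ∉ cells lam r → T p = ∅) ∧
       (∃ B ∈ cells lam r, (T B).card = 2 ∧ ∀ p ∈ cells lam r, p ≠ B → (T p).card = 1) ∧
       (∀ p ∈ cells lam r, ∀ x ∈ T p, 1 ≤ x ∧ x ≤ k + p.1) ∧
       (∀ i j, (i, j) ∈ cells lam r → (i, j + 1) ∈ cells lam r →
          ∀ x ∈ T (i, j), ∀ y ∈ T (i, j + 1), x ≤ y) ∧
       (∀ i j, (i, j) ∈ cells lam r → (i + 1, j) ∈ cells lam r →
          ∀ x ∈ T (i, j), ∀ y ∈ T (i + 1, j), x < y)}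

/-- Reverse plane partitions of shape `lam` (with `r` rows) with entries in `{0,…,k}`:
weakly increasing along rows and down columns; entries outside the diagram normalized to `0`. -/
def RPP (lam : ℕ → ℕ) (r k : ℕ) : Set ((ℕ × ℕ) → ℕ) :=
  {P | (∀ p, p ∉ cells lam r → P p = 0) ∧
       (∀ p ∈ cells lam r, P p ≤ k) ∧
       (∀ i j, (i, j) ∈ cells lam r → (i, j + 1) ∈ cells lam r → P (i, j) ≤ P (i, j + 1)) ∧
       (∀ i j, (i, j) ∈ cells lam r → (i + 1, j) ∈ cells lam r → P (i, j) ≤ P (i + 1, j))}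

/-- A subshape of `lam`: a down-closed subset of the cells of `lam`
(i.e. a Young diagram contained in `lam`). -/
def IsSubshape (lam : ℕ → ℕ) (r : ℕ) (μ : Set (ℕ × ℕ)) : Prop :=
  μ ⊆ cells lam r ∧
  ∀ p ∈ μ, ∀ q : ℕ × ℕ, 1 ≤ q.1 → q.1 ≤ p.1 → 1 ≤ q.2 → q.2 ≤ p.2 → q ∈ μ

/-- The induced subshape `α(P,i)`: cells of `lam` whose entry in `P` is strictly less than `i`. -/
def alphaShape (lam : ℕ → ℕ) (r : ℕ) (P : (ℕ × ℕ) → ℕ) (i : ℕ) : Set (ℕ × ℕ) :=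
  {p | p ∈ cells lam r ∧ P p < i}

/-- A corner of a subshape `μ`: a cell of `μ` such that the cells immediately below
and to the right are not in `μ`. -/
def IsShapeCorner (μ : Set (ℕ × ℕ)) (p : ℕ × ℕ) : Prop :=
  p ∈ μ ∧ (p.1 + 1, p.2) ∉ μ ∧ (p.1, p.2 + 1) ∉ μ

/-- A proper outside corner of a subshape `μ` of `lam`: a cell of `lam` not in `μ` whose
upper neighbour is in `μ` (or which lies in the first row) and whose left neighbour is
in `μ` (or which lies in the first column). -/
def IsProperOutsideCorner (lam : ℕ → ℕ) (r : ℕ) (μ : Set (ℕ × ℕ)) (p : ℕ × ℕ) : Prop :=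
  p ∈ cells lam r ∧ p ∉ μ ∧
  ((p.1 - 1, p.2) ∈ μ ∨ p.1 = 1) ∧ ((p.1, p.2 - 1) ∈ μ ∨ p.2 = 1)

/-- The jaggedness of a subshape `μ` of `lam`: the number of corners of `μ` plus the
number of proper outside corners of `μ`. -/
noncomputable def jag (lam : ℕ → ℕ) (r : ℕ) (μ : Set (ℕ × ℕ)) : ℕ :=
  {p | IsShapeCorner μ p}.ncard + {p | IsProperOutsideCorner lam r μ p}.ncard

/-- `p` can be toggled into the subshape `μ`. -/
def ToggleIn (lam : ℕ → ℕ) (r : ℕ) (μ : Set (ℕ × ℕ)) (p : ℕ × ℕ) : Prop :=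
  p ∉ μ ∧ IsSubshape lam r (insert p μ)

/-- `p` can be toggled out of the subshape `μ`. -/
def ToggleOut (lam : ℕ → ℕ) (r : ℕ) (μ : Set (ℕ × ℕ)) (p : ℕ × ℕ) : Prop :=
  p ∈ μ ∧ IsSubshape lam r (μ \ {p})

/-- The `j`-th part of the rectangular staircase partition `δ_d(b^a)`,
namely `b * (d - ⌈j/a⌉)`. -/
def deltaSC (a b d : ℕ) : ℕ → ℕ := fun j => b * (d - (j + a - 1) / a)

section Aux

lemma cells_finite (lam : ℕ → ℕ) (r : ℕ) : (cells lam r).Finite := by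
  apply Set.Finite.subset (Set.finite_Icc ((1 : ℕ), (1 : ℕ)) (r, (Finset.Icc 1 r).sup lam))
  rintro ⟨a, b⟩ ⟨h1, h2, h3, h4⟩
  rw [Set.mem_Icc]
  refine ⟨⟨h1, h3⟩, ⟨h2, le_trans h4 (Finset.le_sup (Finset.mem_Icc.2 ⟨h1, h2⟩))⟩⟩

lemma lam_anti {lam : ℕ → ℕ} {r : ℕ} (hpart : IsPartition lam r) :
    ∀ a b, 1 ≤ a → a ≤ b → b ≤ r → lam b ≤ lam a := by
  intro a b ha hab hbr
  induction b, hab using Nat.le_induction with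
  | base => exact le_rfl
  | succ n hn ih =>
    exact le_trans (hpart.1 n (le_trans ha hn) hbr) (ih (le_trans (Nat.le_succ n) hbr))

lemma cells_dc {lam : ℕ → ℕ} {r : ℕ} (hpart : IsPartition lam r) {p : ℕ × ℕ}
    (hp : p ∈ cells lam r) {q : ℕ × ℕ} (h1 : 1 ≤ q.1) (h2 : q.1 ≤ p.1)
    (h3 : 1 ≤ q.2) (h4 : q.2 ≤ p.2) : q ∈ cells lam r := by
  obtain ⟨ha, hb, hc, hd⟩ := hp
  exact ⟨h1, le_trans h2 hb, h3, le_trans h4 (le_trans hd (lam_anti hpart q.1 p.1 h1 h2 hb))⟩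

lemma bssyt_nonempty {lam : ℕ → ℕ} {r k : ℕ} {T : (ℕ × ℕ) → Finset ℕ}
    (hT : T ∈ BSSYT lam r k) {p : ℕ × ℕ} (hp : p ∈ cells lam r) : (T p).Nonempty := by
  obtain ⟨-, ⟨B, hB, hB2, hB1⟩, -, -, -⟩ := hT
  rw [← Finset.card_pos]
  by_cases hpB : p = B
  · subst hpB; omega
  · rw [hB1 p hp hpB]; omega

lemma bssyt_row_le {lam : ℕ → ℕ} {r k : ℕ} {T : (ℕ × ℕ) → Finset ℕ}
    (hpart : IsPartition lam r) (hT : T ∈ BSSYT lam r k) :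
    ∀ n j, (n, j) ∈ cells lam r → ∀ x ∈ T (n, j), n ≤ x := by
  intro n
  induction n with
  | zero => intro j _ x _; exact Nat.zero_le x
  | succ m ih =>
    intro j hp x hx
    have h1x : 1 ≤ x := (hT.2.2.1 (m + 1, j) hp x hx).1
    rcases Nat.eq_zero_or_pos m with hm | hm
    · omega
    · have hup : (m, j) ∈ cells lam r := cells_dc hpart hp hm (Nat.le_succ m) hp.2.2.1 le_rfl
      obtain ⟨y, hy⟩ := bssyt_nonempty hT hup
      have := hT.2.2.2.2 m j hup hp y hy x hx
      have := ih j hup y hy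
      omega

open Classical in
noncomputable def gmap (lam : ℕ → ℕ) (r : ℕ) (P : (ℕ × ℕ) → ℕ) (i : ℕ) (C : ℕ × ℕ) :
    (ℕ × ℕ) → Finset ℕ :=
  fun p => if p ∈ cells lam r then
    (if p = C then {P p + p.1, i + p.1} else {P p + p.1}) else ∅

lemma gmap_not_mem {lam : ℕ → ℕ} {r : ℕ} {P : (ℕ × ℕ) → ℕ} {i : ℕ} {C p : ℕ × ℕ}
    (h : p ∉ cells lam r) : gmap lam r P i C p = ∅ := by
  simp [gmap, h]

lemma gmap_ne {lam : ℕ → ℕ} {r : ℕ} {P : (ℕ × ℕ) → ℕ} {i : ℕ} {C p : ℕ × ℕ}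
    (h : p ∈ cells lam r) (hne : p ≠ C) : gmap lam r P i C p = {P p + p.1} := by
  simp [gmap, h, hne]

lemma gmap_at {lam : ℕ → ℕ} {r : ℕ} {P : (ℕ × ℕ) → ℕ} {i : ℕ} {C : ℕ × ℕ}
    (h : C ∈ cells lam r) : gmap lam r P i C C = {P C + C.1, i + C.1} := by
  simp [gmap, h]

lemma mem_gmap {lam : ℕ → ℕ} {r : ℕ} {P : (ℕ × ℕ) → ℕ} {i : ℕ} {C p : ℕ × ℕ} {x : ℕ}
    (h : p ∈ cells lam r) (hx : x ∈ gmap lam r P i C p) :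
    x = P p + p.1 ∨ (p = C ∧ x = i + p.1) := by
  by_cases hc : p = C
  · rw [hc, gmap_at (hc ▸ h)] at hx
    rcases Finset.mem_insert.1 hx with h' | h'
    · left; rw [hc]; exact h'
    · right; exact ⟨hc, by rw [hc]; exact Finset.mem_singleton.1 h'⟩
  · rw [gmap_ne h hc] at hx
    left; exact Finset.mem_singleton.1 hx

lemma gmap_mem {lam : ℕ → ℕ} {r k : ℕ} {P : (ℕ × ℕ) → ℕ} {i : ℕ} {C : ℕ × ℕ}
    (hP : P ∈ RPP lam r k) (hi1 : 1 ≤ i) (hik : i ≤ k)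
    (hC : IsShapeCorner (alphaShape lam r P i) C) :
    gmap lam r P i C ∈ BSSYT lam r k := by
  obtain ⟨hCc, hPC⟩ := hC.1
  refine ⟨fun p hp => gmap_not_mem hp, ⟨C, hCc, ?_, ?_⟩, ?_, ?_, ?_⟩
  · rw [gmap_at hCc]
    rw [Finset.card_insert_of_notMem (by simp; omega), Finset.card_singleton]
  · intro p hp hpC
    rw [gmap_ne hp hpC, Finset.card_singleton]
  · intro p hp x hx
    rcases mem_gmap hp hx with h | ⟨-, h⟩
    · have := hP.2.1 p hp
      have := hp.1
      omega
    · have := hp.1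
      omega
  · intro a b h1 h2 x hx y hy
    rcases mem_gmap h1 hx with hx' | ⟨hxC, hx'⟩ <;> rcases mem_gmap h2 hy with hy' | ⟨hyC, hy'⟩
    · have := hP.2.2.1 a b h1 h2; simp at hx' hy' ⊢; omega
    · -- y is the extra entry at C = (a, b+1); x = P (a,b) + a ≤ P C + a < i + a
      have hle := hP.2.2.1 a b h1 h2
      have : P (a, b + 1) < i := by rw [hyC]; exact hPC
      simp at hx' hy' ⊢; omega
    · -- x extra at C = (a,b); right neighbour not in alpha
      have hnr := hC.2.2
      subst hxC
      have : ¬ P (a, b + 1) < i := fun hlt => hnr ⟨h2, hlt⟩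
      simp at hx' hy' ⊢
      omega
    · exfalso; rw [← hyC] at hxC; simp at hxC
  · intro a b h1 h2 x hx y hy
    rcases mem_gmap h1 hx with hx' | ⟨hxC, hx'⟩ <;> rcases mem_gmap h2 hy with hy' | ⟨hyC, hy'⟩
    · have := hP.2.2.2 a b h1 h2; simp at hx' hy' ⊢; omega
    · -- y extra at C = (a+1, b): x = P (a,b)+a ≤ P C + a < i + a < i + a + 1
      have hle := hP.2.2.2 a b h1 h2
      have : P (a + 1, b) < i := by rw [hyC]; exact hPC
      simp at hx' hy' ⊢; omega
    · -- x extra at C = (a,b); below neighbour not in alpha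
      have hnb := hC.2.1
      subst hxC
      have : ¬ P (a + 1, b) < i := fun hlt => hnb ⟨h2, hlt⟩
      simp at hx' hy' ⊢
      omega
    · exfalso; rw [← hyC] at hxC; simp at hxC

end Aux
section Aux2

lemma pair_eq_pair {a b a' b' : ℕ} (hab : a < b) (hab' : a' < b')
    (h : ({a, b} : Finset ℕ) = {a', b'}) : a = a' ∧ b = b' := by
  have h1 : a ∈ ({a', b'} : Finset ℕ) := h ▸ Finset.mem_insert_self a {b}
  have h2 : b ∈ ({a', b'} : Finset ℕ) := h ▸ Finset.mem_insert_of_mem (Finset.mem_singleton_self b)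
  have h3 : a' ∈ ({a, b} : Finset ℕ) := h.symm ▸ Finset.mem_insert_self a' {b'}
  have h4 : b' ∈ ({a, b} : Finset ℕ) := h.symm ▸ Finset.mem_insert_of_mem (Finset.mem_singleton_self b')
  simp only [Finset.mem_insert, Finset.mem_singleton] at h1 h2 h3 h4
  omega

lemma gmap_inj {lam : ℕ → ℕ} {r k : ℕ} {P P' : (ℕ × ℕ) → ℕ} {i i' : ℕ} {C C' : ℕ × ℕ}
    (hP : P ∈ RPP lam r k) (hC : IsShapeCorner (alphaShape lam r P i) C)
    (hP' : P' ∈ RPP lam r k) (hC' : IsShapeCorner (alphaShape lam r P' i') C')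
    (h : gmap lam r P i C = gmap lam r P' i' C') : P = P' ∧ i = i' ∧ C = C' := by
  obtain ⟨hCc, hPC⟩ := hC.1
  obtain ⟨hCc', hPC'⟩ := hC'.1
  have hCC : C = C' := by
    by_contra hne
    have h1 := congrFun h C
    rw [gmap_at hCc, gmap_ne (lam := lam) hCc hne] at h1
    have := congrArg Finset.card h1
    rw [Finset.card_insert_of_notMem (by simp; omega), Finset.card_singleton,
      Finset.card_singleton] at this
    omega
  subst hCC
  have hPP : ∀ p, P p = P' p ∧ (p = C → i = i') := by
    intro p
    by_cases hp : p ∈ cells lam r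
    · by_cases hpc : p = C
      · subst hpc
        have h1 := congrFun h p
        rw [gmap_at hCc, gmap_at (lam := lam) hCc] at h1
        have := pair_eq_pair (by omega) (by omega) h1
        constructor <;> omega
      · have h1 := congrFun h p
        rw [gmap_ne hp hpc, gmap_ne (lam := lam) hp hpc] at h1
        have := Finset.singleton_injective h1
        exact ⟨by omega, fun hc => absurd hc hpc⟩
    · exact ⟨by rw [hP.1 p hp, hP'.1 p hp], fun hc => absurd (hc ▸ hp) (fun hh => hp (hc ▸ hCc))⟩
  refine ⟨funext fun p => (hPP p).1, (hPP C).2 rfl, rfl⟩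

lemma gmap_surj {lam : ℕ → ℕ} {r k : ℕ} {T : (ℕ × ℕ) → Finset ℕ}
    (hpart : IsPartition lam r) (hT : T ∈ BSSYT lam r k) :
    ∃ P i C, (P ∈ RPP lam r k ∧ 1 ≤ i ∧ i ≤ k ∧
      IsShapeCorner (alphaShape lam r P i) C) ∧ gmap lam r P i C = T := by
  classical
  have hne : ∀ p ∈ cells lam r, (T p).Nonempty := fun p hp => bssyt_nonempty hT hp
  obtain ⟨hoff, ⟨B, hB, hB2, hB1⟩, hbnd, hrow, hcol⟩ := hT
  set P : (ℕ × ℕ) → ℕ := fun p => if h : p ∈ cells lam r then (T p).min' (hne p h) - p.1 else 0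
    with hPdef
  have hPval : ∀ p (h : p ∈ cells lam r), P p = (T p).min' (hne p h) - p.1 := fun p h => dif_pos h
  have hrowle : ∀ p (h : p ∈ cells lam r), p.1 ≤ (T p).min' (hne p h) := by
    intro p h
    exact bssyt_row_le hpart ⟨hoff, ⟨B, hB, hB2, hB1⟩, hbnd, hrow, hcol⟩ p.1 p.2 h _
      (Finset.min'_mem _ _)
  set a := (T B).min' (hne B hB) with ha
  set b := (T B).max' (hne B hB) with hb
  have haB : a ∈ T B := Finset.min'_mem _ _
  have hbB : b ∈ T B := Finset.max'_mem _ _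
  have hab : a < b := Finset.min'_lt_max'_of_card _ (by omega)
  have haup : B.1 ≤ a := hrowle B hB
  have hbk : b ≤ k + B.1 := (hbnd B hB b hbB).2
  refine ⟨P, b - B.1, B, ⟨?_, by omega, by omega, ?_, ?_, ?_⟩, ?_⟩
  · -- P ∈ RPP
    refine ⟨fun p hp => dif_neg hp, ?_, ?_, ?_⟩
    · intro p hp
      rw [hPval p hp]
      have := (hbnd p hp _ (Finset.min'_mem _ (hne p hp))).2
      omega
    · intro u v h1 h2
      rw [hPval _ h1, hPval _ h2]
      have := hrow u v h1 h2 _ (Finset.min'_mem _ (hne _ h1)) _ (Finset.min'_mem _ (hne _ h2))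
      simp only
      omega
    · intro u v h1 h2
      rw [hPval _ h1, hPval _ h2]
      have := hcol u v h1 h2 _ (Finset.min'_mem _ (hne _ h1)) _ (Finset.min'_mem _ (hne _ h2))
      simp only
      omega
  · -- B ∈ alphaShape
    refine ⟨hB, ?_⟩
    rw [hPval B hB]
    omega
  · -- below not in alphaShape
    rintro ⟨hq, hqlt⟩
    rw [hPval _ hq] at hqlt
    have := hcol B.1 B.2 hB hq b hbB _ (Finset.min'_mem _ (hne _ hq))
    simp only at hqlt
    omega
  · -- right not in alphaShape
    rintro ⟨hq, hqlt⟩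
    rw [hPval _ hq] at hqlt
    have := hrow B.1 B.2 hB hq b hbB _ (Finset.min'_mem _ (hne _ hq))
    simp only at hqlt
    omega
  · -- gmap P (b - B.1) B = T
    funext p
    by_cases hp : p ∈ cells lam r
    · by_cases hpB : p = B
      · subst hpB
        rw [gmap_at hB]
        have hsub : ({a, b} : Finset ℕ) ⊆ T p := by
          intro x hx
          simp only [Finset.mem_insert, Finset.mem_singleton] at hx
          rcases hx with rfl | rfl
          · exact haB
          · exact hbB
        have hTeq : T p = {a, b} :=
          (Finset.eq_of_subset_of_card_le hsub (by
            rw [Finset.card_insert_of_notMem (by simp; omega), Finset.card_singleton]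
            omega)).symm
        rw [hTeq, hPval p hB]
        congr 1
        · omega
        · congr 1
          omega
      · rw [gmap_ne hp hpB]
        obtain ⟨x, hx⟩ := Finset.card_eq_one.1 (hB1 p hp hpB)
        have hmx : (T p).min' (hne p hp) = x :=
          Finset.mem_singleton.1 (by rw [← hx]; exact Finset.min'_mem (T p) (hne p hp))
        rw [hx, hPval p hp, hmx]
        have : x ≥ p.1 := hmx ▸ hrowle p hp
        congr 1
        omega
    · rw [gmap_not_mem hp, hoff p hp]

end Aux2
lemma rpp_finite (lam : ℕ → ℕ) (r k : ℕ) : (RPP lam r k).Finite := by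
  classical
  have hcf : (cells lam r).Finite := cells_finite lam r
  haveI := hcf.to_subtype
  have him : ((fun P => fun c : ↥(cells lam r) => P c.1) '' RPP lam r k).Finite := by
    apply Set.Finite.subset
      (Set.Finite.pi (fun _ : ↥(cells lam r) => Set.finite_Iic k))
    rintro f ⟨P, hP, rfl⟩
    intro c _
    exact hP.2.1 c.1 c.2
  apply Set.Finite.of_finite_image him
  intro Q hQ Q' hQ' h
  funext p
  by_cases hp : p ∈ cells lam r
  · exact congrFun h ⟨p, hp⟩
  · rw [hQ.1 p hp, hQ'.1 p hp]
/-- Theorem 3.2: `BSSYT(λ,k)` is in bijection with triples `(P, i, C)`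
where `P ∈ RPP(λ,k)`, `1 ≤ i ≤ k`, and `C` is a corner of `α(P,i)`; in particular
`|BSSYT(λ,k)| = Σ_{P ∈ RPP(λ,k)} Σ_{i=1}^k #{corners of α(P,i)}`. -/
theorem bssyt_corner_representation (lam : ℕ → ℕ) (r k : ℕ)
    (hpart : IsPartition lam r) (hk : 1 ≤ k) :
    Nonempty ((BSSYT lam r k) ≃
      {t : ((ℕ × ℕ) → ℕ) × ℕ × (ℕ × ℕ) //
        t.1 ∈ RPP lam r k ∧ 1 ≤ t.2.1 ∧ t.2.1 ≤ k ∧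
        IsShapeCorner (alphaShape lam r t.1 t.2.1) t.2.2}) ∧
    (BSSYT lam r k).ncard =
      ∑ᶠ P ∈ RPP lam r k, ∑ i ∈ Finset.Icc 1 k,
        {p | IsShapeCorner (alphaShape lam r P i) p}.ncard := by
  classical
  set Sset : Set (((ℕ × ℕ) → ℕ) × ℕ × (ℕ × ℕ)) :=
    {t | t.1 ∈ RPP lam r k ∧ 1 ≤ t.2.1 ∧ t.2.1 ≤ k ∧
      IsShapeCorner (alphaShape lam r t.1 t.2.1) t.2.2} with hSset
  have hG : ∀ t : ↥Sset, gmap lam r t.1.1 t.1.2.1 t.1.2.2 ∈ BSSYT lam r k := by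
    rintro ⟨⟨P, i, C⟩, h1, h2, h3, h4⟩
    exact gmap_mem h1 h2 h3 h4
  set G : ↥Sset → ↥(BSSYT lam r k) :=
    fun t => ⟨gmap lam r t.1.1 t.1.2.1 t.1.2.2, hG t⟩ with hGdef
  have hbij : Function.Bijective G := by
    constructor
    · rintro ⟨⟨P, i, C⟩, h1, h2, h3, h4⟩ ⟨⟨P', i', C'⟩, h1', h2', h3', h4'⟩ h
      have h' : gmap lam r P i C = gmap lam r P' i' C' := congrArg Subtype.val h
      obtain ⟨e1, e2, e3⟩ := gmap_inj h1 h4 h1' h4' h'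
      subst e1; subst e2; subst e3
      rfl
    · rintro ⟨T, hT⟩
      obtain ⟨P, i, C, hmem, heq⟩ := gmap_surj hpart hT
      exact ⟨⟨(P, i, C), hmem⟩, Subtype.ext heq⟩
  have e : ↥(BSSYT lam r k) ≃ ↥Sset := (Equiv.ofBijective G hbij).symm
  refine ⟨⟨e⟩, ?_⟩
  -- counting
  have hcellsfin : (cells lam r).Finite := cells_finite lam r
  have hcfin : ∀ (P : (ℕ × ℕ) → ℕ) (i : ℕ),
      {p | IsShapeCorner (alphaShape lam r P i) p}.Finite :=
    fun P i => hcellsfin.subset (fun p hp => hp.1.1)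
  have hRfin : (RPP lam r k).Finite := rpp_finite lam r k
  have hSfin : Sset.Finite := by
    apply Set.Finite.subset (hRfin.prod ((Set.finite_Icc 1 k).prod hcellsfin))
    rintro ⟨P, i, C⟩ ⟨h1, h2, h3, h4⟩
    exact ⟨h1, ⟨h2, h3⟩, h4.1.1⟩
  have hcard1 : (BSSYT lam r k).ncard = Sset.ncard := by
    rw [← Nat.card_coe_set_eq, ← Nat.card_coe_set_eq]
    exact Nat.card_congr e
  have hdecomp : hSfin.toFinset =
      hRfin.toFinset.biUnion (fun P => (Finset.Icc 1 k).biUnion (fun i =>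
        ((hcfin P i).toFinset.image (fun C => (P, i, C))))) := by
    ext ⟨P, i, C⟩
    simp only [Set.Finite.mem_toFinset, Finset.mem_biUnion, Finset.mem_image,
      Finset.mem_Icc, Prod.mk.injEq]
    constructor
    · rintro ⟨h1, h2, h3, h4⟩
      exact ⟨P, h1, i, ⟨h2, h3⟩, C, h4, rfl, rfl, rfl⟩
    · rintro ⟨P', h1, i', ⟨h2, h3⟩, C', h4, rfl, rfl, rfl⟩
      exact ⟨h1, h2, h3, h4⟩
  have hmemfst : ∀ (P : (ℕ × ℕ) → ℕ) (t : ((ℕ × ℕ) → ℕ) × ℕ × (ℕ × ℕ)),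
      t ∈ (Finset.Icc 1 k).biUnion (fun i =>
        ((hcfin P i).toFinset.image (fun C => (P, i, C)))) → t.1 = P := by
    intro P t ht
    simp only [Finset.mem_biUnion, Finset.mem_image] at ht
    obtain ⟨i, -, C, -, rfl⟩ := ht
    rfl
  have hcard2 : Sset.ncard = ∑ P ∈ hRfin.toFinset, ∑ i ∈ Finset.Icc 1 k,
      {p | IsShapeCorner (alphaShape lam r P i) p}.ncard := by
    rw [Set.ncard_eq_toFinset_card Sset hSfin, hdecomp,
      Finset.card_biUnion (by
        intro P hP P' hP' hne
        rw [Function.onFun, Finset.disjoint_left]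
        intro t ht ht'
        exact hne ((hmemfst P t ht).symm.trans (hmemfst P' t ht')))]
    refine Finset.sum_congr rfl (fun P hP => ?_)
    rw [Finset.card_biUnion (by
      intro i hi i' hi' hne
      rw [Function.onFun, Finset.disjoint_left]
      rintro t ht ht'
      simp only [Finset.mem_image] at ht ht'
      obtain ⟨C, -, rfl⟩ := ht
      obtain ⟨C', -, h⟩ := ht'
      exact hne (congrArg (fun z => z.2.1) h).symm)]
    refine Finset.sum_congr rfl (fun i hi => ?_)
    rw [Finset.card_image_of_injective _ (fun a b h => by simpa using h)]
    exact (Set.ncard_eq_toFinset_card _ (hcfin P i)).symm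
  rw [hcard1, hcard2, ← finsum_mem_coe_finset, hRfin.coe_toFinset]
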